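/- Let z ∈ ℂ with |z| < 1 and let Log denote the principal complex logarithm. Then for every r > 0 the series Σ_{n=0}^{∞} Log(1 − e^{−rn} z) converges absolutely, and lim_{r→0+} r · Σ_{n=0}^{∞} Log(1 − e^{−rn} z) = −L(z), where L(z) = Σ_{k≥1} z^k/k². Equivalently, ln (z;q)_∞ ∼ −dilog(1−z)/r as r → 0+, where q = e^{−r} and (z;q)_∞ = ∏_{n≥0}(1 − qⁿ z). -/

import Mathlib

open Complex Filter Topology

/-- `L(z) = Σ_{k ≥ 1} z^k/k² = dilog(1-z)`. -/
noncomputable def dilogL (z : ℂ) : ℂ :=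
  ∑' k : ℕ, z ^ (k + 1) / ((k : ℂ) + 1) ^ 2

namespace QDilogAux

lemma norm_log_one_sub_le' {w : ℂ} (hw : ‖w‖ < 1) :
    ‖Complex.log (1 - w)‖ ≤ (‖w‖ * (1 - ‖w‖)⁻¹ / 2 + 1) * ‖w‖ := by
  have h := Complex.norm_log_one_add_le (z := -w) (by simpa using hw)
  rw [← sub_eq_add_neg] at h
  simp only [norm_neg] at h
  calc ‖Complex.log (1 - w)‖ ≤ ‖w‖ ^ 2 * (1 - ‖w‖)⁻¹ / 2 + ‖w‖ := h
    _ = (‖w‖ * (1 - ‖w‖)⁻¹ / 2 + 1) * ‖w‖ := by ring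

/-- The real ratio `r / (1 - e^{-r(k+1)})`. -/
noncomputable def psi (k : ℕ) (r : ℝ) : ℝ := r / (1 - Real.exp (-(r * ((k : ℝ) + 1))))

lemma psi_tendsto (k : ℕ) :
    Tendsto (psi k) (𝓝[>] (0 : ℝ)) (𝓝 (((k : ℝ) + 1)⁻¹)) := by
  have hd : HasDerivAt (fun x : ℝ => 1 - Real.exp (-(x * ((k : ℝ) + 1)))) ((k : ℝ) + 1) 0 := by
    have h1 : HasDerivAt (fun x : ℝ => -(x * ((k : ℝ) + 1))) (-((k : ℝ) + 1)) 0 := by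
      exact ((hasDerivAt_id (0 : ℝ)).mul_const ((k : ℝ) + 1)).neg.congr_deriv (by ring)
    have h2 := h1.exp
    have h3 := h2.const_sub 1
    simpa using h3
  have hslope := hasDerivAt_iff_tendsto_slope.mp hd
  have hslope' : Tendsto (fun r : ℝ => (1 - Real.exp (-(r * ((k : ℝ) + 1)))) / r)
      (𝓝[≠] (0 : ℝ)) (𝓝 ((k : ℝ) + 1)) := by
    refine hslope.congr fun r => ?_
    simp [slope_def_field]
  have hne : ((k : ℝ) + 1) ≠ 0 := by positivity
  have hinv := hslope'.inv₀ hne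
  have hinv' : Tendsto (psi k) (𝓝[≠] (0 : ℝ)) (𝓝 (((k : ℝ) + 1)⁻¹)) := by
    refine hinv.congr fun r => ?_
    rw [inv_div]
    rfl
  exact hinv'.mono_left (nhdsWithin_mono 0 fun x hx => ne_of_gt hx)

lemma psi_nonneg (k : ℕ) {r : ℝ} (hr : 0 < r) : 0 ≤ psi k r := by
  have hx : 0 < r * ((k : ℝ) + 1) := by positivity
  have he : Real.exp (-(r * ((k : ℝ) + 1))) < 1 := by
    rw [Real.exp_lt_one_iff]; linarith
  exact div_nonneg hr.le (by linarith)

lemma psi_le_two (k : ℕ) {r : ℝ} (hr : 0 < r) (hr1 : r ≤ 1) : psi k r ≤ 2 := by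
  have hk0 : (0 : ℝ) ≤ (k : ℝ) := Nat.cast_nonneg k
  set x := r * ((k : ℝ) + 1) with hxdef
  have hx : 0 < x := by positivity
  have he : Real.exp (-x) < 1 := by rw [Real.exp_lt_one_iff]; linarith
  have hden : 0 < 1 - Real.exp (-x) := by linarith
  rw [psi, ← hxdef, div_le_iff₀ hden]
  have h1 : x + 1 ≤ Real.exp x := Real.add_one_le_exp x
  have h2 : Real.exp (-x) * (x + 1) ≤ 1 := by
    calc Real.exp (-x) * (x + 1) ≤ Real.exp (-x) * Real.exp x :=
          mul_le_mul_of_nonneg_left h1 (Real.exp_pos _).le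
      _ = 1 := by rw [← Real.exp_add]; simp
  nlinarith [Real.exp_pos (-x), mul_pos hr (show (0:ℝ) < (k : ℝ) + 1 by positivity),
    mul_le_mul_of_nonneg_right hr1 (show (0:ℝ) ≤ (k : ℝ) + 1 by positivity)]

variable {z : ℂ}

lemma hasSum_log (hz : ‖z‖ < 1) {q : ℝ} (hq0 : 0 ≤ q) (hq1 : q < 1) (n : ℕ) :
    HasSum (fun k : ℕ => -((((q : ℂ)) ^ (k + 1)) ^ n * z ^ (k + 1) / ((k : ℂ) + 1)))
      (Complex.log (1 - (q : ℂ) ^ n * z)) := by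
  set w : ℂ := (q : ℂ) ^ n * z with hw
  have hqn : ‖(q : ℂ) ^ n‖ ≤ 1 := by
    rw [norm_pow, Complex.norm_real, Real.norm_of_nonneg hq0]
    exact pow_le_one₀ hq0 hq1.le
  have hwlt : ‖w‖ < 1 := by
    calc ‖w‖ = ‖(q : ℂ) ^ n‖ * ‖z‖ := norm_mul _ _
      _ ≤ 1 * ‖z‖ := mul_le_mul_of_nonneg_right hqn (norm_nonneg z)
      _ = ‖z‖ := one_mul _
      _ < 1 := hz
  have h : HasSum (fun k : ℕ => -(w ^ k / (k : ℂ))) (Complex.log (1 - w)) := by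
    simpa using (Complex.hasSum_taylorSeries_neg_log hwlt).neg
  have h2 := (hasSum_nat_add_iff' (f := fun k : ℕ => -(w ^ k / (k : ℂ))) 1).mpr h
  simp only [Finset.range_one, Finset.sum_singleton, Nat.cast_zero, div_zero, neg_zero,
    sub_zero, pow_zero] at h2
  refine h2.congr_fun fun k => ?_
  have hwk : w ^ (k + 1) = ((q : ℂ) ^ (k + 1)) ^ n * z ^ (k + 1) := by
    rw [hw, mul_pow, ← pow_mul, ← pow_mul, mul_comm n (k + 1)]
  rw [← hwk]
  push_cast
  ring

set_option maxHeartbeats 800000 in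
lemma summable_F (hz : ‖z‖ < 1) {q : ℝ} (hq0 : 0 ≤ q) (hq1 : q < 1) :
    Summable (fun p : ℕ × ℕ =>
      -((((q : ℂ)) ^ (p.2 + 1)) ^ p.1 * z ^ (p.2 + 1) / ((p.2 : ℂ) + 1))) := by
  have hgeo : Summable (fun p : ℕ × ℕ => q ^ p.1 * ‖z‖ ^ (p.2 + 1)) := by
    have h1 : Summable (fun n : ℕ => q ^ n) := summable_geometric_of_lt_one hq0 hq1
    have h2 : Summable (fun k : ℕ => ‖z‖ ^ (k + 1)) := by
      refine ((summable_geometric_of_lt_one (norm_nonneg z) hz).mul_left ‖z‖).congr fun k => ?_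
      rw [pow_succ]; ring
    exact h1.mul_of_nonneg h2 (fun n => pow_nonneg hq0 n)
      (fun k => pow_nonneg (norm_nonneg z) (k + 1))
  refine Summable.of_norm_bounded hgeo fun p => ?_
  obtain ⟨n, k⟩ := p
  have hk1 : (1 : ℝ) ≤ (k : ℝ) + 1 := by
    have : (0 : ℝ) ≤ (k : ℝ) := Nat.cast_nonneg k
    linarith
  have hkc : ‖((k : ℂ) + 1)‖ = (k : ℝ) + 1 := by
    have h : ((k : ℂ) + 1) = ((k + 1 : ℕ) : ℂ) := by push_cast; ring
    rw [h, Complex.norm_natCast]; push_cast; ring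
  have hnorm : ‖-((((q : ℂ)) ^ (k + 1)) ^ n * z ^ (k + 1) / ((k : ℂ) + 1))‖
      = (q ^ (k + 1)) ^ n * ‖z‖ ^ (k + 1) / ((k : ℝ) + 1) := by
    rw [norm_neg, norm_div, norm_mul, norm_pow, norm_pow, norm_pow, Complex.norm_real,
      Real.norm_of_nonneg hq0, hkc]
  rw [hnorm]
  have hqswap : (q ^ (k + 1)) ^ n = (q ^ n) ^ (k + 1) := by
    rw [← pow_mul, ← pow_mul, mul_comm]
  have hqn : (q ^ (k + 1)) ^ n ≤ q ^ n := by
    rw [hqswap]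
    exact pow_le_of_le_one (pow_nonneg hq0 n) (pow_le_one₀ hq0 hq1.le) (Nat.succ_ne_zero k)
  have hzpos : (0:ℝ) ≤ ‖z‖ ^ (k + 1) := pow_nonneg (norm_nonneg z) _
  calc (q ^ (k + 1)) ^ n * ‖z‖ ^ (k + 1) / ((k : ℝ) + 1)
      ≤ (q ^ (k + 1)) ^ n * ‖z‖ ^ (k + 1) :=
        div_le_self (mul_nonneg (pow_nonneg (pow_nonneg hq0 _) _) hzpos) hk1
    _ ≤ q ^ n * ‖z‖ ^ (k + 1) := mul_le_mul_of_nonneg_right hqn hzpos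

lemma hasSum_inner {q : ℝ} (hq0 : 0 ≤ q) (hq1 : q < 1) (k : ℕ) :
    HasSum (fun n : ℕ => -((((q : ℂ)) ^ (k + 1)) ^ n * z ^ (k + 1) / ((k : ℂ) + 1)))
      (-(z ^ (k + 1) / (((k : ℂ) + 1) * (1 - (q : ℂ) ^ (k + 1))))) := by
  have hξ : ‖(q : ℂ) ^ (k + 1)‖ < 1 := by
    rw [norm_pow, Complex.norm_real, Real.norm_of_nonneg hq0]
    exact pow_lt_one₀ hq0 hq1 (Nat.succ_ne_zero k)
  have h := ((hasSum_geometric_of_norm_lt_one hξ).mul_right (z ^ (k + 1) / ((k : ℂ) + 1))).neg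
  have heq : -((1 - (q : ℂ) ^ (k + 1))⁻¹ * (z ^ (k + 1) / ((k : ℂ) + 1)))
      = -(z ^ (k + 1) / (((k : ℂ) + 1) * (1 - (q : ℂ) ^ (k + 1)))) := by
    rw [inv_mul_eq_div, div_div]
  rw [heq] at h
  exact h.congr_fun fun n => by ring

set_option maxHeartbeats 1000000 in
lemma tsum_log_eq (hz : ‖z‖ < 1) {q : ℝ} (hq0 : 0 ≤ q) (hq1 : q < 1) :
    ∑' n : ℕ, Complex.log (1 - (q : ℂ) ^ n * z)
      = ∑' k : ℕ, -(z ^ (k + 1) / (((k : ℂ) + 1) * (1 - (q : ℂ) ^ (k + 1)))) := by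
  have hF : Summable (Function.uncurry fun (n k : ℕ) =>
      -((((q : ℂ)) ^ (k + 1)) ^ n * z ^ (k + 1) / ((k : ℂ) + 1))) :=
    summable_F hz hq0 hq1 (z := z)
  calc ∑' n : ℕ, Complex.log (1 - (q : ℂ) ^ n * z)
      = ∑' (n : ℕ) (k : ℕ), -((((q : ℂ)) ^ (k + 1)) ^ n * z ^ (k + 1) / ((k : ℂ) + 1)) :=
        tsum_congr fun n => (hasSum_log hz hq0 hq1 n).tsum_eq.symm
    _ = ∑' (k : ℕ) (n : ℕ), -((((q : ℂ)) ^ (k + 1)) ^ n * z ^ (k + 1) / ((k : ℂ) + 1)) :=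
        Summable.tsum_comm' (f := fun (n k : ℕ) =>
            -((((q : ℂ)) ^ (k + 1)) ^ n * z ^ (k + 1) / ((k : ℂ) + 1)))
          hF (fun n => (hasSum_log hz hq0 hq1 n).summable)
          (fun k => (hasSum_inner hq0 hq1 k).summable) |>.symm
    _ = ∑' k : ℕ, -(z ^ (k + 1) / (((k : ℂ) + 1) * (1 - (q : ℂ) ^ (k + 1)))) :=
        tsum_congr fun k => (hasSum_inner hq0 hq1 k).tsum_eq

end QDilogAux

open QDilogAux in
theorem quantum_dilogarithm_asymptotics (z : ℂ) (hz : ‖z‖ < 1) :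
    (∀ r : ℝ, 0 < r →
      Summable fun n : ℕ =>
        ‖Complex.log (1 - (Real.exp (-(r * n)) : ℂ) * z)‖) ∧
    Filter.Tendsto
      (fun r : ℝ =>
        (r : ℂ) * ∑' n : ℕ, Complex.log (1 - (Real.exp (-(r * n)) : ℂ) * z))
      (nhdsWithin 0 (Set.Ioi 0)) (nhds (-dilogL z)) := by
  have hzn : ‖z‖ < 1 := hz
  have hcast : ∀ (r : ℝ) (n : ℕ),
      ((Real.exp (-(r * n)) : ℝ) : ℂ) = ((Real.exp (-r) : ℝ) : ℂ) ^ n := by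
    intro r n
    rw [← Complex.ofReal_pow, ← Real.exp_nat_mul]
    congr 1
    push_cast
    ring
  constructor
  · -- summability of the log series
    intro r hr
    set q : ℝ := Real.exp (-r) with hq
    have hq0 : 0 < q := Real.exp_pos _
    have hq1 : q < 1 := by rw [hq, Real.exp_lt_one_iff]; linarith
    set C : ℝ := (‖z‖ * (1 - ‖z‖)⁻¹ / 2 + 1) * ‖z‖ with hC
    refine Summable.of_nonneg_of_le (fun n => norm_nonneg _)
      (fun n => ?_) ((summable_geometric_of_lt_one hq0.le hq1).mul_left C)
    have hwn : ‖((q : ℂ)) ^ n * z‖ = q ^ n * ‖z‖ := by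
      rw [norm_mul, norm_pow, Complex.norm_real, Real.norm_of_nonneg hq0.le]
    have hwle : ‖((q : ℂ)) ^ n * z‖ ≤ ‖z‖ := by
      rw [hwn]
      calc q ^ n * ‖z‖ ≤ 1 * ‖z‖ :=
            mul_le_mul_of_nonneg_right (pow_le_one₀ hq0.le hq1.le) (norm_nonneg z)
        _ = ‖z‖ := one_mul _
    have hwlt : ‖((q : ℂ)) ^ n * z‖ < 1 := lt_of_le_of_lt hwle hzn
    have hb := norm_log_one_sub_le' hwlt
    rw [hcast r n]
    calc ‖Complex.log (1 - (q : ℂ) ^ n * z)‖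
        = ‖Complex.log (1 - (q : ℂ) ^ n * z)‖ := rfl
      _ ≤ (‖(q : ℂ) ^ n * z‖ * (1 - ‖(q : ℂ) ^ n * z‖)⁻¹ / 2 + 1) * ‖(q : ℂ) ^ n * z‖ := hb
      _ ≤ (‖z‖ * (1 - ‖z‖)⁻¹ / 2 + 1) * (q ^ n * ‖z‖) := by
          rw [hwn] at hwle hwlt ⊢
          set a : ℝ := q ^ n * ‖z‖ with ha
          have ha0 : 0 ≤ a := by positivity
          have hinv : (1 - a)⁻¹ ≤ (1 - ‖z‖)⁻¹ := by
            apply inv_anti₀ (by linarith) (by linarith)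
          have hmul : a * (1 - a)⁻¹ ≤ ‖z‖ * (1 - ‖z‖)⁻¹ :=
            mul_le_mul hwle hinv (inv_nonneg.mpr (by linarith)) (norm_nonneg z)
          nlinarith [hmul, ha0]
      _ = C * q ^ n := by rw [hC]; ring
  · -- the limit
    set c : ℕ → ℂ := fun k => -(z ^ (k + 1) / ((k : ℂ) + 1)) with hc
    set f : ℝ → ℕ → ℂ := fun r k => c k * ((psi k r : ℝ) : ℂ) with hf
    set g : ℕ → ℂ := fun k => -(z ^ (k + 1) / ((k : ℂ) + 1) ^ 2) with hg
    have hkc : ∀ k : ℕ, ‖((k : ℂ) + 1)‖ = (k : ℝ) + 1 := by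
      intro k
      have h : ((k : ℂ) + 1) = ((k + 1 : ℕ) : ℂ) := by push_cast; ring
      rw [h, Complex.norm_natCast]; push_cast; ring
    have hbound_sum : Summable (fun k : ℕ => 2 * ‖z‖ ^ (k + 1)) := by
      refine ((summable_geometric_of_lt_one (norm_nonneg z) hzn).mul_left
        (2 * ‖z‖)).congr fun k => ?_
      rw [pow_succ]; ring
    have hpoint : ∀ k : ℕ, Tendsto (fun r : ℝ => f r k) (𝓝[>] (0 : ℝ)) (𝓝 (g k)) := by
      intro k
      have h1 : Tendsto (fun r : ℝ => ((psi k r : ℝ) : ℂ)) (𝓝[>] (0 : ℝ))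
          (𝓝 ((((k : ℝ) + 1)⁻¹ : ℝ) : ℂ)) :=
        (Complex.continuous_ofReal.tendsto _).comp (psi_tendsto k)
      have h2 := h1.const_mul (c k)
      have h3 : c k * ((((k : ℝ) + 1)⁻¹ : ℝ) : ℂ) = g k := by
        rw [hc, hg]
        push_cast
        rw [sq, ← div_div, neg_mul, ← div_eq_mul_inv]
      rw [h3] at h2
      exact h2
    have hbound : ∀ᶠ r in 𝓝[>] (0 : ℝ), ∀ k : ℕ, ‖f r k‖ ≤ 2 * ‖z‖ ^ (k + 1) := by
      filter_upwards [Ioo_mem_nhdsGT_of_mem (Set.mem_Ico.mpr ⟨le_refl (0:ℝ), one_pos⟩)]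
        with r hr k
      obtain ⟨hr0, hr1⟩ := hr
      have hk1 : (1 : ℝ) ≤ (k : ℝ) + 1 := by
        have : (0 : ℝ) ≤ (k : ℝ) := Nat.cast_nonneg k
        linarith
      have hψ0 := psi_nonneg k hr0
      have hψ2 := psi_le_two k hr0 hr1.le
      have : ‖f r k‖ = ‖z‖ ^ (k + 1) / ((k : ℝ) + 1) * psi k r := by
        rw [hf, hc]
        simp only [norm_mul, norm_neg, norm_div, norm_pow, Complex.norm_real,
          Real.norm_of_nonneg hψ0, hkc k]
      rw [this]
      have hA : ‖z‖ ^ (k + 1) / ((k : ℝ) + 1) ≤ ‖z‖ ^ (k + 1) :=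
        div_le_self (pow_nonneg (norm_nonneg z) _) hk1
      calc ‖z‖ ^ (k + 1) / ((k : ℝ) + 1) * psi k r
          ≤ ‖z‖ ^ (k + 1) / ((k : ℝ) + 1) * 2 :=
            mul_le_mul_of_nonneg_left hψ2 (by positivity)
        _ ≤ ‖z‖ ^ (k + 1) * 2 := mul_le_mul_of_nonneg_right hA (by norm_num)
        _ = 2 * ‖z‖ ^ (k + 1) := by ring
    have hlim : Tendsto (fun r : ℝ => ∑' k, f r k) (𝓝[>] (0 : ℝ)) (𝓝 (∑' k, g k)) :=
      tendsto_tsum_of_dominated_convergence hbound_sum hpoint hbound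
    have hgsum : ∑' k, g k = -dilogL z := by
      rw [dilogL, ← tsum_neg]
    rw [hgsum] at hlim
    refine hlim.congr' ?_
    filter_upwards [self_mem_nhdsWithin] with r hr
    have hr0 : 0 < r := hr
    set q : ℝ := Real.exp (-r) with hq
    have hq0 : 0 < q := Real.exp_pos _
    have hq1 : q < 1 := by rw [hq, Real.exp_lt_one_iff]; linarith
    have hlog : (fun n : ℕ => Complex.log (1 - (Real.exp (-(r * n)) : ℂ) * z))
        = fun n : ℕ => Complex.log (1 - (q : ℂ) ^ n * z) := by
      funext n
      rw [hcast r n]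
    have hqk : ∀ k : ℕ, ((q : ℂ)) ^ (k + 1) = ((Real.exp (-(r * ((k : ℝ) + 1))) : ℝ) : ℂ) := by
      intro k
      rw [← Complex.ofReal_pow, ← Real.exp_nat_mul]
      congr 2
      push_cast
      ring
    calc ∑' k, f r k
        = ∑' k : ℕ, (r : ℂ) * -(z ^ (k + 1) / (((k : ℂ) + 1) * (1 - (q : ℂ) ^ (k + 1)))) := by
          refine tsum_congr fun k => ?_
          have hk0 : (0 : ℝ) ≤ (k : ℝ) := Nat.cast_nonneg k
          have hE : Real.exp (-(r * ((k : ℝ) + 1))) < 1 := by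
            rw [Real.exp_lt_one_iff]; nlinarith
          have hD : (1 : ℂ) - ((Real.exp (-(r * ((k : ℝ) + 1))) : ℝ) : ℂ) ≠ 0 := by
            have h1 : (1 : ℂ) - ((Real.exp (-(r * ((k : ℝ) + 1))) : ℝ) : ℂ)
                = (((1 - Real.exp (-(r * ((k : ℝ) + 1)))) : ℝ) : ℂ) := by push_cast; ring
            rw [h1]
            exact_mod_cast (by linarith : (0:ℝ) < 1 - Real.exp (-(r * ((k : ℝ) + 1)))).ne'
          have hC : ((k : ℂ) + 1) ≠ 0 := by
            have := Nat.cast_add_one_ne_zero (R := ℂ) k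
            push_cast at this
            exact this
          simp only [hf, hc, psi, hqk k]
          rw [Complex.ofReal_div, Complex.ofReal_sub, Complex.ofReal_one]
          field_simp
      _ = (r : ℂ) * ∑' k : ℕ, -(z ^ (k + 1) / (((k : ℂ) + 1) * (1 - (q : ℂ) ^ (k + 1)))) :=
          tsum_mul_left
      _ = (r : ℂ) * ∑' n : ℕ, Complex.log (1 - (Real.exp (-(r * n)) : ℂ) * z) := by
          rw [hlog, tsum_log_eq hzn hq0.le hq1]
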